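/- If G is a non-complete double-critical k-chromatic graph, then no two vertices of degree k+1 are adjacent in G. -/

import Mathlib

open SimpleGraph
open Finset

/-- A graph is vertex-critical if deleting any vertex decreases the chromatic number. -/
def VertexCritical {V : Type} (G : SimpleGraph V) : Prop :=
  ∀ v : V, (G.induce ({v}ᶜ : Set V)).chromaticNumber < G.chromaticNumber

/-- A vertex-critical graph is double-critical if deleting the two end-vertices of any
edge decreases the chromatic number by at least two. -/
def DoubleCritical {V : Type} (G : SimpleGraph V) : Prop :=
  VertexCritical G ∧
  ∀ x y : V, G.Adj x y →
    (G.induce ({x, y}ᶜ : Set V)).chromaticNumber + 2 ≤ G.chromaticNumber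


section Pure
variable {α : Type} [DecidableEq α]

lemma pigeon (S : Finset α) (f : α → ℕ) (m : ℕ) (hcard : m + 2 ≤ S.card)
    (hb : ∀ v ∈ S, f v < m) :
    (∃ a ∈ S, ∃ b ∈ S, ∃ e ∈ S, a ≠ b ∧ a ≠ e ∧ b ≠ e ∧ f a = f b ∧ f a = f e) ∨
    (∃ a ∈ S, ∃ b ∈ S, ∃ e ∈ S, ∃ d ∈ S, a ≠ b ∧ e ≠ d ∧ f a = f b ∧ f e = f d ∧ f a ≠ f e) := by
  have hm : 0 < m := by
    rcases Finset.card_pos.mp (by omega : 0 < S.card) with ⟨v, hv⟩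
    exact Nat.pos_of_ne_zero (fun h => by simp [h] at hb; exact (hb v hv).elim)
  have hmaps : ∀ v ∈ S, f v ∈ Finset.range m := fun v hv => Finset.mem_range.mpr (hb v hv)
  obtain ⟨a, ha, b, hb', hab, hfab⟩ :=
    Finset.exists_ne_map_eq_of_card_lt_of_maps_to (by simpa using by omega : (Finset.range m).card < S.card) hmaps
  set S' := (S.erase a).erase b with hS'
  have hS'sub : S' ⊆ S := (Finset.erase_subset _ _).trans (Finset.erase_subset _ _)
  by_cases htrip : ∃ e ∈ S', f e = f a
  · obtain ⟨e, he, hfe⟩ := htrip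
    have hea : e ≠ a := Finset.ne_of_mem_erase (Finset.mem_of_mem_erase he)
    have heb : e ≠ b := Finset.ne_of_mem_erase he
    exact Or.inl ⟨a, ha, b, hb', e, hS'sub he, hab, hea.symm, heb.symm, hfab, hfe.symm⟩
  · push_neg at htrip
    have hcard' : (Finset.range m).card - 1 < S'.card := by
      have h1 : S'.card = S.card - 2 := by
        rw [hS', Finset.card_erase_of_mem (Finset.mem_erase.mpr ⟨hab.symm, hb'⟩),
          Finset.card_erase_of_mem ha]
        omega
      simp only [Finset.card_range] at *
      omega
    have hmaps' : ∀ v ∈ S', f v ∈ (Finset.range m).erase (f a) := by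
      intro v hv
      exact Finset.mem_erase.mpr ⟨htrip v hv, hmaps v (hS'sub hv)⟩
    obtain ⟨e, he, d, hd, hed, hfed⟩ :=
      Finset.exists_ne_map_eq_of_card_lt_of_maps_to
        (by rwa [Finset.card_erase_of_mem (Finset.mem_range.mpr (hb a ha))]) hmaps'
    refine Or.inr ⟨a, ha, b, hb', e, hS'sub he, d, hS'sub hd, hab, hed, hfab, hfed, ?_⟩
    exact fun h => (Finset.mem_erase.mp (hmaps' e he)).1 h.symm

omit [DecidableEq α] in
lemma count3 (S : Finset α) (f : α → ℕ) (m : ℕ) (hcard : S.card ≤ m + 2)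
    (hb : ∀ v ∈ S, f v < m) (hall : ∀ i, i < m → ∃ w ∈ S, f w = i)
    {p₁ q₁ p₂ q₂ p₃ q₃ : α}
    (hp₁ : p₁ ∈ S) (hq₁ : q₁ ∈ S) (hp₂ : p₂ ∈ S) (hq₂ : q₂ ∈ S) (hp₃ : p₃ ∈ S) (hq₃ : q₃ ∈ S)
    (hne₁ : p₁ ≠ q₁) (hne₂ : p₂ ≠ q₂) (hne₃ : p₃ ≠ q₃)
    (hf₁ : f p₁ = f q₁) (hf₂ : f p₂ = f q₂) (hf₃ : f p₃ = f q₃)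
    (h12 : f p₁ ≠ f p₂) (h13 : f p₁ ≠ f p₃) (h23 : f p₂ ≠ f p₃) : False := by
  classical
  have hmaps : ∀ v ∈ S, f v ∈ Finset.range m := fun v hv => Finset.mem_range.mpr (hb v hv)
  have hsum : S.card = ∑ i ∈ Finset.range m, (S.filter (fun v => f v = i)).card :=
    Finset.card_eq_sum_card_fiberwise hmaps
  set T : Finset ℕ := {f p₁, f p₂, f p₃} with hT
  have hTcard : T.card = 3 := by
    rw [hT, Finset.card_insert_of_notMem (by simp [h12, h13]),
      Finset.card_insert_of_notMem (by simp [h23]), Finset.card_singleton]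
  have hTsub : T ⊆ Finset.range m := by
    intro i hi
    simp only [hT, Finset.mem_insert, Finset.mem_singleton] at hi
    rcases hi with h | h | h <;> subst h <;>
      [exact hmaps _ hp₁; exact hmaps _ hp₂; exact hmaps _ hp₃]
  have hm3 : 3 ≤ m := by
    have := Finset.card_le_card hTsub
    simpa [hTcard] using this
  have hpoint : ∀ i ∈ Finset.range m, (if i ∈ T then 2 else 1) ≤ (S.filter (fun v => f v = i)).card := by
    intro i hi
    by_cases hiT : i ∈ T
    · rw [if_pos hiT]
      simp only [hT, Finset.mem_insert, Finset.mem_singleton] at hiT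
      rcases hiT with h | h | h <;> subst h
      · exact Finset.one_lt_card.mpr ⟨p₁, by simp [hp₁], q₁, by simp [hq₁, hf₁.symm], hne₁⟩
      · exact Finset.one_lt_card.mpr ⟨p₂, by simp [hp₂], q₂, by simp [hq₂, hf₂.symm], hne₂⟩
      · exact Finset.one_lt_card.mpr ⟨p₃, by simp [hp₃], q₃, by simp [hq₃, hf₃.symm], hne₃⟩
    · rw [if_neg hiT]
      obtain ⟨w, hw, hfw⟩ := hall i (Finset.mem_range.mp hi)
      exact Finset.card_pos.mpr ⟨w, by simp [hw, hfw]⟩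
  have hsum2 : ∑ i ∈ Finset.range m, (if i ∈ T then 2 else 1) ≤ S.card := by
    rw [hsum]; exact Finset.sum_le_sum hpoint
  have hval : ∑ i ∈ Finset.range m, (if i ∈ T then 2 else 1) = m + T.card := by
    rw [Finset.sum_ite, Finset.sum_const, Finset.sum_const]
    have h1 : (Finset.range m).filter (fun i => i ∈ T) = T := by
      rw [Finset.filter_mem_eq_inter, Finset.inter_eq_right.mpr hTsub]
    have h2 := Finset.card_filter_add_card_filter_not
      (s := Finset.range m) (p := fun i => i ∈ T)
    rw [h1, Finset.card_range] at h2
    rw [h1]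
    simp only [smul_eq_mul]
    omega
  omega

end Pure

section Helpers

variable {V : Type} (G : SimpleGraph V)

lemma getColoring {s : Set V} {n : ℕ} (h : (G.induce s).chromaticNumber ≤ (n : ℕ∞)) :
    ∃ c : V → ℕ, (∀ v ∈ s, c v < n) ∧ ∀ u v, u ∈ s → v ∈ s → G.Adj u v → c u ≠ c v := by
  rw [chromaticNumber_le_iff_colorable] at h
  obtain ⟨C⟩ := h
  classical
  refine ⟨fun v => if hv : v ∈ s then (C ⟨v, hv⟩ : Fin n).val else 0, ?_, ?_⟩
  · intro v hv
    simp only [dif_pos hv]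
    exact (C ⟨v, hv⟩).isLt
  · intro u v hu hv hadj
    simp only [dif_pos hu, dif_pos hv]
    have : (G.induce s).Adj ⟨u, hu⟩ ⟨v, hv⟩ := by
      simp [comap_adj, hadj]
    have hne := C.valid this
    exact fun hval => hne (Fin.ext hval)

lemma noColoring {k : ℕ} (hchrom : G.chromaticNumber = (k : ℕ∞)) (hk2 : 2 ≤ k)
    (c : V → ℕ) (hb : ∀ v, c v < k - 1) (hp : ∀ u v, G.Adj u v → c u ≠ c v) : False := by
  have hcol : G.Colorable (k - 1) := by
    exact ⟨Coloring.mk (fun v => (⟨c v, hb v⟩ : Fin (k-1)))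
      (fun {u v} h => by
        intro hval
        exact hp u v h (congrArg Fin.val hval))⟩
  have := hcol.chromaticNumber_le
  rw [hchrom] at this
  have hle : k ≤ k - 1 := by exact_mod_cast this
  omega

lemma pairColoring {k : ℕ} (hdc : DoubleCritical G) (hchrom : G.chromaticNumber = (k : ℕ∞))
    (hk2 : 2 ≤ k) {x y : V} (hxy : G.Adj x y) :
    ∃ c : V → ℕ, (∀ w, w ≠ x → w ≠ y → c w < k - 2) ∧
      (∀ a b, a ≠ x → a ≠ y → b ≠ x → b ≠ y → G.Adj a b → c a ≠ c b) := by
  have h2 := hdc.2 x y hxy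
  rw [hchrom] at h2
  have hcast : ((k - 2 : ℕ) : ℕ∞) + 2 = (k : ℕ∞) := by
    have : (k - 2) + 2 = k := by omega
    exact_mod_cast congrArg (Nat.cast (R := ℕ∞)) this
  rw [← hcast] at h2
  have h3 : (G.induce ({x, y}ᶜ : Set V)).chromaticNumber ≤ ((k - 2 : ℕ) : ℕ∞) := by
    rwa [ENat.add_le_add_iff_right (by simp : (2:ℕ∞) ≠ ⊤)] at h2
  obtain ⟨c, hb, hp⟩ := getColoring G h3
  refine ⟨c, ?_, ?_⟩
  · intro w hwx hwy
    exact hb w (by simp [hwx, hwy])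
  · intro a b hax hay hbx hby hadj
    exact hp a b (by simp [hax, hay]) (by simp [hbx, hby]) hadj

lemma two_le_of_adj {k : ℕ} (hdc : DoubleCritical G) (hchrom : G.chromaticNumber = (k : ℕ∞))
    {x y : V} (hxy : G.Adj x y) : 2 ≤ k := by
  have h2 := hdc.2 x y hxy
  rw [hchrom] at h2
  have : (2 : ℕ∞) ≤ (k : ℕ∞) := le_trans (le_add_self) h2
  exact_mod_cast this

/-- In a (k-2)-coloring of `G - x - t` (for an edge `xt`), every color is used on a common
neighbour of `x` and `t`. -/
lemma commonNbr {k : ℕ} (hchrom : G.chromaticNumber = (k : ℕ∞)) (hk2 : 2 ≤ k)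
    {x t : V} (hxt : G.Adj x t) {c : V → ℕ}
    (hb : ∀ w, w ≠ x → w ≠ t → c w < k - 2)
    (hp : ∀ a b, a ≠ x → a ≠ t → b ≠ x → b ≠ t → G.Adj a b → c a ≠ c b)
    {i : ℕ} (hi : i < k - 2) : ∃ w, G.Adj x w ∧ G.Adj t w ∧ c w = i := by
  by_contra hcon
  push_neg at hcon
  classical
  have htx : t ≠ x := (G.ne_of_adj hxt).symm
  set c2 : V → ℕ := fun v => if v = x then k - 2 else if v = t then i
    else if G.Adj t v ∧ c v = i then k - 2 else c v with hc2
  have e1 : c2 x = k - 2 := by simp [hc2]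
  have e2 : c2 t = i := by simp [hc2, htx]
  have e3 : ∀ w, w ≠ x → w ≠ t → G.Adj t w → c w = i → c2 w = k - 2 := by
    intro w h1 h2 h3 h4; simp [hc2, h1, h2, h3, h4]
  have e4 : ∀ w, w ≠ x → w ≠ t → ¬(G.Adj t w ∧ c w = i) → c2 w = c w := by
    intro w h1 h2 h3; simp only [hc2, if_neg h1, if_neg h2, if_neg h3]
  have ebound : ∀ w, w ≠ x → w ≠ t → c2 w ≤ k - 2 := by
    intro w h1 h2
    by_cases h3 : G.Adj t w ∧ c w = i
    · rw [e3 w h1 h2 h3.1 h3.2]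
    · rw [e4 w h1 h2 h3]; exact le_of_lt (hb w h1 h2)
  apply noColoring G hchrom hk2 c2
  · intro v
    by_cases h1 : v = x
    · rw [h1, e1]; omega
    · by_cases h2 : v = t
      · rw [h2, e2]; omega
      · have := ebound v h1 h2; omega
  · intro u v hadj
    by_cases hux : u = x
    · have hadj' : G.Adj x v := hux ▸ hadj
      have hvx : v ≠ x := (G.ne_of_adj hadj').symm
      rw [hux, e1]
      by_cases hvt : v = t
      · rw [hvt, e2]; omega
      · by_cases h3 : G.Adj t v ∧ c v = i
        · exact absurd h3.2 (hcon v hadj' h3.1)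
        · rw [e4 v hvx hvt h3]
          have := hb v hvx hvt; omega
    · by_cases hvx : v = x
      · have hadj' : G.Adj x u := hvx ▸ hadj.symm
        have hux' : u ≠ x := (G.ne_of_adj hadj').symm
        rw [hvx, e1]
        by_cases hut : u = t
        · rw [hut, e2]; omega
        · by_cases h3 : G.Adj t u ∧ c u = i
          · exact absurd h3.2 (hcon u hadj' h3.1)
          · rw [e4 u hux' hut h3]
            have := hb u hux' hut; omega
      · by_cases hut : u = t
        · have hadj' : G.Adj t v := hut ▸ hadj
          have hvt : v ≠ t := (G.ne_of_adj hadj').symm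
          rw [hut, e2]
          by_cases h3 : G.Adj t v ∧ c v = i
          · rw [e3 v hvx hvt h3.1 h3.2]; omega
          · rw [e4 v hvx hvt h3]
            intro h
            exact h3 ⟨hadj', h.symm⟩
        · by_cases hvt : v = t
          · have hadj' : G.Adj t u := hvt ▸ hadj.symm
            have hut' : u ≠ t := (G.ne_of_adj hadj').symm
            rw [hvt, e2]
            by_cases h3 : G.Adj t u ∧ c u = i
            · rw [e3 u hux hut' h3.1 h3.2]; omega
            · rw [e4 u hux hut' h3]
              intro h
              exact h3 ⟨hadj', h⟩
          · by_cases h3 : G.Adj t u ∧ c u = i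
            · by_cases h4 : G.Adj t v ∧ c v = i
              · exact absurd (h3.2.trans h4.2.symm) (hp u v hux hut hvx hvt hadj)
              · rw [e3 u hux hut h3.1 h3.2, e4 v hvx hvt h4]
                have := hb v hvx hvt; omega
            · by_cases h4 : G.Adj t v ∧ c v = i
              · rw [e4 u hux hut h3, e3 v hvx hvt h4.1 h4.2]
                have := hb u hux hut; omega
              · rw [e4 u hux hut h3, e4 v hvx hvt h4]
                exact hp u v hux hut hvx hvt hadj

end Helpers
section Weapons

variable {V : Type} (G : SimpleGraph V)

/-- Scheme A: if color classes `i` (around `x`) and `j` (around `y`) have no edge between them,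
we can build a `(k-1)`-coloring; contradiction. -/
lemma fire {k : ℕ} (hchrom : G.chromaticNumber = (k : ℕ∞)) (hk2 : 2 ≤ k)
    {x y : V} (hxy : G.Adj x y) {c : V → ℕ}
    (hb : ∀ w, w ≠ x → w ≠ y → c w < k - 2)
    (hp : ∀ a b, a ≠ x → a ≠ y → b ≠ x → b ≠ y → G.Adj a b → c a ≠ c b)
    {i j : ℕ} (hi : i < k - 2) (hj : j < k - 2) (hij : i ≠ j)
    (hsolo : ∀ u, G.Adj x u → u ≠ y → c u = i →
      ∀ v, G.Adj y v → v ≠ x → c v = j → ¬G.Adj u v) : False := by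
  classical
  have hyx : y ≠ x := (G.ne_of_adj hxy).symm
  set P : V → Prop := fun v => (G.Adj x v ∧ c v = i) ∨ (G.Adj y v ∧ c v = j) with hP
  set c2 : V → ℕ := fun v => if v = x then i else if v = y then j
    else if P v then k - 2 else c v with hc2
  have e1 : c2 x = i := by simp [hc2]
  have e2 : c2 y = j := by simp [hc2, hyx]
  have e3 : ∀ w, w ≠ x → w ≠ y → P w → c2 w = k - 2 := by
    intro w h1 h2 h3; simp only [hc2, if_neg h1, if_neg h2, if_pos h3]
  have e4 : ∀ w, w ≠ x → w ≠ y → ¬ P w → c2 w = c w := by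
    intro w h1 h2 h3; simp only [hc2, if_neg h1, if_neg h2, if_neg h3]
  apply noColoring G hchrom hk2 c2
  · intro v
    by_cases h1 : v = x
    · rw [h1, e1]; omega
    · by_cases h2 : v = y
      · rw [h2, e2]; omega
      · by_cases h3 : P v
        · rw [e3 v h1 h2 h3]; omega
        · rw [e4 v h1 h2 h3]; have := hb v h1 h2; omega
  · intro u v hadj
    by_cases hux : u = x
    · have hadj' : G.Adj x v := hux ▸ hadj
      have hvx : v ≠ x := (G.ne_of_adj hadj').symm
      rw [hux, e1]
      by_cases hvy : v = y
      · rw [hvy, e2]; exact hij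
      · by_cases h3 : P v
        · rw [e3 v hvx hvy h3]; omega
        · rw [e4 v hvx hvy h3]
          intro h
          exact h3 (Or.inl ⟨hadj', h.symm⟩)
    · by_cases hvx : v = x
      · have hadj' : G.Adj x u := hvx ▸ hadj.symm
        have hux' : u ≠ x := (G.ne_of_adj hadj').symm
        rw [hvx, e1]
        by_cases huy : u = y
        · rw [huy, e2]; exact fun h => hij h.symm
        · by_cases h3 : P u
          · rw [e3 u hux' huy h3]; omega
          · rw [e4 u hux' huy h3]
            intro h
            exact h3 (Or.inl ⟨hadj', h⟩)
      · by_cases huy : u = y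
        · have hadj' : G.Adj y v := huy ▸ hadj
          have hvy : v ≠ y := (G.ne_of_adj hadj').symm
          rw [huy, e2]
          by_cases h3 : P v
          · rw [e3 v hvx hvy h3]; omega
          · rw [e4 v hvx hvy h3]
            intro h
            exact h3 (Or.inr ⟨hadj', h.symm⟩)
        · by_cases hvy : v = y
          · have hadj' : G.Adj y u := hvy ▸ hadj.symm
            have huy' : u ≠ y := (G.ne_of_adj hadj').symm
            rw [hvy, e2]
            by_cases h3 : P u
            · rw [e3 u hux huy' h3]; omega
            · rw [e4 u hux huy' h3]
              intro h
              exact h3 (Or.inr ⟨hadj', h⟩)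
          · by_cases h3 : P u
            · by_cases h4 : P v
              · exfalso
                rcases h3 with ⟨ha, hc⟩ | ⟨ha, hc⟩ <;> rcases h4 with ⟨ha', hc'⟩ | ⟨ha', hc'⟩
                · exact hp u v hux huy hvx hvy hadj (hc.trans hc'.symm)
                · exact hsolo u ha huy hc v ha' hvx hc' hadj
                · exact hsolo v ha' hvy hc' u ha hux hc hadj.symm
                · exact hp u v hux huy hvx hvy hadj (hc.trans hc'.symm)
              · rw [e3 u hux huy h3, e4 v hvx hvy h4]
                have := hb v hvx hvy; omega
            · by_cases h4 : P v
              · rw [e4 u hux huy h3, e3 v hvx hvy h4]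
                have := hb u hux huy; omega
              · rw [e4 u hux huy h3, e4 v hvx hvy h4]
                exact hp u v hux huy hvx hvy hadj

/-- A vertex `t` of the neighbourhood of `x` (of degree `k+1`) has at most two non-neighbours
in that neighbourhood. -/
lemma noThree {k : ℕ} [Fintype V] [DecidableRel G.Adj]
    (hdc : DoubleCritical G) (hchrom : G.chromaticNumber = (k : ℕ∞))
    {x t : V} (hdeg : G.degree x = k + 1) (hxt : G.Adj x t)
    {w₁ w₂ w₃ : V} (hw₁ : G.Adj x w₁) (hw₂ : G.Adj x w₂) (hw₃ : G.Adj x w₃)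
    (hn₁ : ¬G.Adj t w₁) (hn₂ : ¬G.Adj t w₂) (hn₃ : ¬G.Adj t w₃)
    (ht₁ : w₁ ≠ t) (ht₂ : w₂ ≠ t) (ht₃ : w₃ ≠ t)
    (d₁₂ : w₁ ≠ w₂) (d₁₃ : w₁ ≠ w₃) (d₂₃ : w₂ ≠ w₃) : False := by
  classical
  have hk2 : 2 ≤ k := two_le_of_adj G hdc hchrom hxt
  obtain ⟨c, hcb, hcp⟩ := pairColoring G hdc hchrom hk2 hxt
  have hex : ∀ i, i < k - 2 → ∃ w, G.Adj x w ∧ G.Adj t w ∧ c w = i :=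
    fun i hi => commonNbr G hchrom hk2 hxt hcb hcp hi
  let F : ℕ → V := fun i => if hi : i < k - 2 then (hex i hi).choose else x
  have hF : ∀ i, i < k - 2 → G.Adj x (F i) ∧ G.Adj t (F i) ∧ c (F i) = i := by
    intro i hi
    simp only [F, dif_pos hi]
    exact (hex i hi).choose_spec
  set S : Finset V := (G.neighborFinset x).erase t with hS
  have hScard : S.card = k := by
    rw [hS, Finset.card_erase_of_mem (by rwa [mem_neighborFinset]),
      G.card_neighborFinset_eq_degree, hdeg]
    omega
  set W : Finset V := {w₁, w₂, w₃} with hW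
  have hWcard : W.card = 3 := by
    rw [hW, Finset.card_insert_of_notMem (by simp [d₁₂, d₁₃]),
      Finset.card_insert_of_notMem (by simp [d₂₃]), Finset.card_singleton]
  have hWS : W ⊆ S := by
    intro w hw
    simp only [hW, Finset.mem_insert, Finset.mem_singleton] at hw
    rcases hw with h | h | h <;> subst h <;>
      simp [hS, Finset.mem_erase, mem_neighborFinset, *]
  have hmap : ∀ i ∈ Finset.range (k - 2), F i ∈ S \ W := by
    intro i hi
    obtain ⟨h1, h2, _⟩ := hF i (Finset.mem_range.mp hi)
    have hFt : F i ≠ t := (G.ne_of_adj h2).symm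
    refine Finset.mem_sdiff.mpr ⟨by simp [hS, Finset.mem_erase, mem_neighborFinset, hFt, h1], ?_⟩
    simp only [hW, Finset.mem_insert, Finset.mem_singleton]
    push_neg
    refine ⟨?_, ?_, ?_⟩ <;> intro h <;> subst h
    · exact hn₁ h2
    · exact hn₂ h2
    · exact hn₃ h2
  have hinj : Set.InjOn F (Finset.range (k - 2)) := by
    intro i hi j hj hij
    have h1 := (hF i (Finset.mem_range.mp hi)).2.2
    have h2 := (hF j (Finset.mem_range.mp hj)).2.2
    rw [← h1, ← h2, hij]
  have hle := Finset.card_le_card_of_injOn F hmap hinj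
  have h3k := Finset.card_le_card hWS
  rw [hWcard, hScard] at h3k
  rw [Finset.card_range, Finset.card_sdiff_of_subset hWS, hScard, hWcard] at hle
  omega

/-- No vertex `b` of `N(x)` has exactly one non-neighbour in `N(x)`. -/
lemma notOne {k : ℕ} (hdc : DoubleCritical G) (hchrom : G.chromaticNumber = (k : ℕ∞))
    {x t b : V} (hxt : G.Adj x t) (hxb : G.Adj x b) (hntb : ¬G.Adj t b) (hbt : b ≠ t)
    (hexcl : ∀ w, G.Adj x w → w ≠ b → ¬G.Adj b w → w = t) : False := by
  have hk2 : 2 ≤ k := two_le_of_adj G hdc hchrom hxt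
  obtain ⟨c, hcb, hcp⟩ := pairColoring G hdc hchrom hk2 hxt
  have hbx : b ≠ x := (G.ne_of_adj hxb).symm
  have hib : c b < k - 2 := hcb b hbx hbt
  obtain ⟨w, hw1, hw2, hw3⟩ := commonNbr G hchrom hk2 hxt hcb hcp hib
  have hwb : w ≠ b := fun h => hntb (h ▸ hw2)
  have hnadj : ¬G.Adj b w := by
    intro had
    exact hcp b w hbx hbt (G.ne_of_adj hw1).symm (G.ne_of_adj hw2).symm had hw3.symm
  exact (G.ne_of_adj hw2).symm (hexcl w hw1 hwb hnadj)

/-- Every vertex with at least one non-neighbour in `N(x)` has exactly two of them. -/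
lemma twoNonNbrs {k : ℕ} [Fintype V] [DecidableRel G.Adj]
    (hdc : DoubleCritical G) (hchrom : G.chromaticNumber = (k : ℕ∞))
    {x b t : V} (hdeg : G.degree x = k + 1) (hxb : G.Adj x b) (hxt : G.Adj x t)
    (hnbt : ¬G.Adj b t) (hbt : b ≠ t) :
    ∃ s, G.Adj x s ∧ s ≠ b ∧ s ≠ t ∧ ¬G.Adj b s ∧
      (∀ w, G.Adj x w → w ≠ b → ¬G.Adj b w → w = t ∨ w = s) := by
  have hsec : ∃ s, G.Adj x s ∧ s ≠ b ∧ s ≠ t ∧ ¬G.Adj b s := by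
    by_contra hno
    push_neg at hno
    refine notOne G hdc hchrom hxt hxb (fun h => hnbt h.symm) hbt ?_
    intro w hw hwb hnadj
    by_contra hwt
    exact hnadj (hno w hw hwb hwt)
  obtain ⟨s, hs1, hs2, hs3, hs4⟩ := hsec
  refine ⟨s, hs1, hs2, hs3, hs4, ?_⟩
  intro w hw hwb hnadj
  by_contra hcon
  push_neg at hcon
  exact noThree G hdc hchrom hdeg hxb
    (w₁ := t) (w₂ := s) (w₃ := w) hxt hs1 hw
    hnbt hs4 hnadj
    hbt.symm hs2 hwb (fun h => hs3 h.symm) (Ne.symm hcon.1) (Ne.symm hcon.2)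

/-- No three pairwise non-adjacent vertices in `N(x)`. -/
lemma noTriangle {k : ℕ} [Fintype V] [DecidableRel G.Adj]
    (hdc : DoubleCritical G) (hchrom : G.chromaticNumber = (k : ℕ∞))
    {x u v w : V} (hdeg : G.degree x = k + 1)
    (hxu : G.Adj x u) (hxv : G.Adj x v) (hxw : G.Adj x w)
    (duv : u ≠ v) (duw : u ≠ w) (dvw : v ≠ w)
    (nuv : ¬G.Adj u v) (nuw : ¬G.Adj u w) (nvw : ¬G.Adj v w) : False := by
  have hk2 : 2 ≤ k := two_le_of_adj G hdc hchrom hxu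
  obtain ⟨c, hcb, hcp⟩ := pairColoring G hdc hchrom hk2 hxu
  have hvx : v ≠ x := (G.ne_of_adj hxv).symm
  have hvu : v ≠ u := duv.symm
  have hiv : c v < k - 2 := hcb v hvx hvu
  obtain ⟨w₀, hw1, hw2, hw3⟩ := commonNbr G hchrom hk2 hxu hcb hcp hiv
  have hw0u : w₀ ≠ u := (G.ne_of_adj hw2).symm
  have hw0v : w₀ ≠ v := fun h => nuv (h ▸ hw2)
  have hw0w : w₀ ≠ w := fun h => nuw (h ▸ hw2)
  have hnw0v : ¬G.Adj w₀ v := by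
    intro had
    exact hcp w₀ v (G.ne_of_adj hw1).symm hw0u hvx hvu had hw3
  exact noThree G hdc hchrom hdeg hxv
    (w₁ := u) (w₂ := w) (w₃ := w₀) hxu hxw hw1
    (fun h => nuv h.symm) nvw (fun h => hnw0v h.symm)
    duv dvw.symm hw0v
    duw hw0u.symm hw0w.symm

/-- Two distinct vertices cannot have the same exact pair of non-neighbours in `N(x)`. -/
lemma noSharedPair {k : ℕ} (hdc : DoubleCritical G) (hchrom : G.chromaticNumber = (k : ℕ∞))
    {x t s u₁ u₂ : V} (hxt : G.Adj x t) (hxs : G.Adj x s) (hxu₁ : G.Adj x u₁) (hxu₂ : G.Adj x u₂)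
    (d12 : u₁ ≠ u₂) (d1t : u₁ ≠ t) (d1s : u₁ ≠ s) (d2t : u₂ ≠ t) (d2s : u₂ ≠ s) (dts : t ≠ s)
    (n1t : ¬G.Adj u₁ t) (n1s : ¬G.Adj u₁ s) (n2t : ¬G.Adj u₂ t) (n2s : ¬G.Adj u₂ s)
    (hex₁ : ∀ w, G.Adj x w → w ≠ u₁ → ¬G.Adj u₁ w → w = t ∨ w = s)
    (hex₂ : ∀ w, G.Adj x w → w ≠ u₂ → ¬G.Adj u₂ w → w = t ∨ w = s) : False := by
  have hk2 : 2 ≤ k := two_le_of_adj G hdc hchrom hxt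
  obtain ⟨c, hcb, hcp⟩ := pairColoring G hdc hchrom hk2 hxt
  have key : ∀ u, G.Adj x u → u ≠ t → u ≠ s → ¬G.Adj u t → ¬G.Adj u s →
      (∀ w, G.Adj x w → w ≠ u → ¬G.Adj u w → w = t ∨ w = s) → c s = c u := by
    intro u hxu hut hus hnut hnus hexu
    have hux : u ≠ x := (G.ne_of_adj hxu).symm
    have hiu : c u < k - 2 := hcb u hux hut
    obtain ⟨w, hw1, hw2, hw3⟩ := commonNbr G hchrom hk2 hxt hcb hcp hiu
    have hwu : w ≠ u := by
      intro h; rw [h] at hw2; exact hnut hw2.symm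
    have hnwu : ¬G.Adj u w := by
      intro had
      exact hcp u w hux hut (G.ne_of_adj hw1).symm (G.ne_of_adj hw2).symm had hw3.symm
    rcases hexu w hw1 hwu hnwu with h | h
    · rw [h] at hw2
      exact absurd hw2 (G.loopless.irrefl t)
    · rw [← h, hw3]
  have h1 := key u₁ hxu₁ d1t d1s n1t n1s hex₁
  have h2 := key u₂ hxu₂ d2t d2s n2t n2s hex₂
  have hadj : G.Adj u₁ u₂ := by
    by_contra hno
    rcases hex₁ u₂ hxu₂ d12.symm hno with h | h
    · exact d2t h
    · exact d2s h
  exact hcp u₁ u₂ (G.ne_of_adj hxu₁).symm d1t (G.ne_of_adj hxu₂).symm d2t hadj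
    (h1.symm.trans h2)

end Weapons
section Kill

variable {V : Type} (G : SimpleGraph V)

/-- The final pigeonhole kill: if all non-adjacent pairs inside `N(x) \ {u,v}` go through a
single vertex `w₀`, deleting the edge `uv` gives a contradiction. -/
lemma kill {k : ℕ} [Fintype V] [DecidableRel G.Adj]
    (hdc : DoubleCritical G) (hchrom : G.chromaticNumber = (k : ℕ∞))
    {x u v w₀ : V} (hdeg : G.degree x = k + 1)
    (hxu : G.Adj x u) (hxv : G.Adj x v) (huv : G.Adj u v)
    (hw : ∀ a b, G.Adj x a → G.Adj x b → a ≠ u → a ≠ v → b ≠ u → b ≠ v → a ≠ b →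
      ¬G.Adj a b → a = w₀ ∨ b = w₀) : False := by
  classical
  have hk2 : 2 ≤ k := two_le_of_adj G hdc hchrom huv
  obtain ⟨c, hcb, hcp⟩ := pairColoring G hdc hchrom hk2 huv
  have hxune : x ≠ u := G.ne_of_adj hxu
  have hxvne : x ≠ v := G.ne_of_adj hxv
  have hvu : v ≠ u := (G.ne_of_adj huv).symm
  set T : Finset V := insert x (((G.neighborFinset x).erase u).erase v) with hT
  have hmemT : ∀ p ∈ T, p ≠ u ∧ p ≠ v ∧ (p = x ∨ G.Adj x p) := by
    intro p hp
    rw [hT, Finset.mem_insert] at hp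
    rcases hp with h | h
    · exact ⟨h ▸ hxune, h ▸ hxvne, Or.inl h⟩
    · rw [Finset.mem_erase, Finset.mem_erase, mem_neighborFinset] at h
      exact ⟨h.2.1, h.1, Or.inr h.2.2⟩
  have hTcard : T.card = k := by
    rw [hT, Finset.card_insert_of_notMem (by
      simp only [Finset.mem_erase, mem_neighborFinset]
      intro h
      exact G.loopless.irrefl x h.2.2)]
    rw [Finset.card_erase_of_mem (by
        rw [Finset.mem_erase, mem_neighborFinset]; exact ⟨hvu, hxv⟩),
      Finset.card_erase_of_mem (by rwa [mem_neighborFinset]),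
      G.card_neighborFinset_eq_degree, hdeg]
    omega
  have hbound : ∀ p ∈ T, c p < k - 2 := by
    intro p hp
    obtain ⟨h1, h2, _⟩ := hmemT p hp
    exact hcb p h1 h2
  have hnonadj : ∀ p q, p ∈ T → q ∈ T → c p = c q → ¬G.Adj p q := by
    intro p q hp hq hpq had
    obtain ⟨h1, h2, _⟩ := hmemT p hp
    obtain ⟨h3, h4, _⟩ := hmemT q hq
    exact hcp p q h1 h2 h3 h4 had hpq
  have hinN : ∀ p q, p ∈ T → q ∈ T → p ≠ q → c p = c q → G.Adj x p := by
    intro p q hp hq hne hpq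
    rcases (hmemT p hp).2.2 with h | h
    · exfalso
      rcases (hmemT q hq).2.2 with h' | h'
      · exact hne (h.trans h'.symm)
      · exact hnonadj p q hp hq hpq (h ▸ h')
    · exact h
  rcases pigeon T c (k - 2) (by omega) hbound with
    ⟨a, ha, b, hb, e, he, hab, hae, hbe, hfab, hfae⟩ |
    ⟨a, ha, b, hb, e, he, d, hd, hab, hed, hfab, hfed, hfane⟩
  · -- a triple of one color: three pairwise non-adjacent vertices of N(x)
    exact noTriangle G hdc hchrom hdeg
      (hinN a b ha hb hab hfab) (hinN b a hb ha hab.symm hfab.symm)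
      (hinN e a he ha hae.symm hfae.symm)
      hab hae hbe
      (hnonadj a b ha hb hfab) (hnonadj a e ha he hfae)
      (hnonadj b e hb he (hfab.symm.trans hfae))
  · -- two disjoint monochromatic pairs
    have hADa := hinN a b ha hb hab hfab
    have hADb := hinN b a hb ha hab.symm hfab.symm
    have hADe := hinN e d he hd hed hfed
    have hADd := hinN d e hd he hed.symm hfed.symm
    have hae : a ≠ e := fun h => hfane (h ▸ rfl)
    have had : a ≠ d := fun h => hfane (h ▸ hfed.symm)
    have hbe : b ≠ e := fun h => hfane (hfab.trans (h ▸ rfl))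
    have hbd : b ≠ d := fun h => hfane (hfab.trans (h ▸ hfed.symm))
    obtain ⟨ha1, ha2, _⟩ := hmemT a ha
    obtain ⟨hb1, hb2, _⟩ := hmemT b hb
    obtain ⟨he1, he2, _⟩ := hmemT e he
    obtain ⟨hd1, hd2, _⟩ := hmemT d hd
    rcases hw a b hADa hADb ha1 ha2 hb1 hb2 hab (hnonadj a b ha hb hfab) with h | h <;>
      rcases hw e d hADe hADd he1 he2 hd1 hd2 hed (hnonadj e d he hd hfed) with h' | h'
    · exact hae (h.trans h'.symm)
    · exact had (h.trans h'.symm)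
    · exact hbe (h.trans h'.symm)
    · exact hbd (h.trans h'.symm)

end Kill

/-- In a non-complete double-critical `k`-chromatic graph, no two vertices of degree
`k + 1` are adjacent. -/
theorem stmt11 {V : Type} [Fintype V] (G : SimpleGraph V) [DecidableRel G.Adj] (k : ℕ)
    (hnc : G ≠ ⊤) (hdc : DoubleCritical G) (hchrom : G.chromaticNumber = k) :
    ∀ x y : V, G.Adj x y → ¬ (G.degree x = k + 1 ∧ G.degree y = k + 1) := by
  intro x y hxy hdegs
  obtain ⟨hdx, hdy⟩ := hdegs
  classical
  have hk2 : 2 ≤ k := two_le_of_adj G hdc hchrom hxy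
  have hyx : G.Adj y x := hxy.symm
  have hxyne : x ≠ y := G.ne_of_adj hxy
  obtain ⟨c, hcb, hcp⟩ := pairColoring G hdc hchrom hk2 hxy
  have hcn : ∀ i, i < k - 2 → ∃ w, G.Adj x w ∧ G.Adj y w ∧ c w = i :=
    fun i hi => commonNbr G hchrom hk2 hxy hcb hcp hi
  -- basic bound on colors of neighbours
  have hcb' : ∀ w, G.Adj x w → w ≠ y → c w < k - 2 :=
    fun w h1 h2 => hcb w (G.ne_of_adj h1).symm h2
  have hcb'' : ∀ w, G.Adj y w → w ≠ x → c w < k - 2 :=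
    fun w h1 h2 => hcb w h2 (G.ne_of_adj h1).symm
  -- same color in the punctured graph implies non-adjacency
  have hnadjX : ∀ p q, G.Adj x p → p ≠ y → G.Adj x q → q ≠ y → c p = c q → ¬G.Adj p q :=
    fun p q h1 h2 h3 h4 h5 had =>
      hcp p q (G.ne_of_adj h1).symm h2 (G.ne_of_adj h3).symm h4 had h5
  have hnadjY : ∀ p q, G.Adj y p → p ≠ x → G.Adj y q → q ≠ x → c p = c q → ¬G.Adj p q :=
    fun p q h1 h2 h3 h4 h5 had =>
      hcp p q h2 (G.ne_of_adj h1).symm h4 (G.ne_of_adj h3).symm had h5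
  -- the two punctured neighbourhoods as finsets
  set Mx : Finset V := (G.neighborFinset x).erase y with hMxdef
  set My : Finset V := (G.neighborFinset y).erase x with hMydef
  have hMxmem : ∀ w, G.Adj x w → w ≠ y → w ∈ Mx := by
    intro w h1 h2
    rw [hMxdef, Finset.mem_erase, mem_neighborFinset]
    exact ⟨h2, h1⟩
  have hMymem : ∀ w, G.Adj y w → w ≠ x → w ∈ My := by
    intro w h1 h2
    rw [hMydef, Finset.mem_erase, mem_neighborFinset]
    exact ⟨h2, h1⟩
  have hMxcard : Mx.card = k := by
    rw [hMxdef, Finset.card_erase_of_mem (by rwa [mem_neighborFinset]),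
      G.card_neighborFinset_eq_degree, hdx]
    omega
  have hMycard : My.card = k := by
    rw [hMydef, Finset.card_erase_of_mem (by rwa [mem_neighborFinset]),
      G.card_neighborFinset_eq_degree, hdy]
    omega
  have hMxprop : ∀ w ∈ Mx, G.Adj x w ∧ w ≠ y := by
    intro w hw
    rw [hMxdef, Finset.mem_erase, mem_neighborFinset] at hw
    exact ⟨hw.2, hw.1⟩
  have hMyprop : ∀ w ∈ My, G.Adj y w ∧ w ≠ x := by
    intro w hw
    rw [hMydef, Finset.mem_erase, mem_neighborFinset] at hw
    exact ⟨hw.2, hw.1⟩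
  -- the two counting weapons
  have countX : ∀ p₁ q₁ p₂ q₂ p₃ q₃ : V,
      G.Adj x p₁ → p₁ ≠ y → G.Adj x q₁ → q₁ ≠ y → G.Adj x p₂ → p₂ ≠ y → G.Adj x q₂ → q₂ ≠ y →
      G.Adj x p₃ → p₃ ≠ y → G.Adj x q₃ → q₃ ≠ y →
      p₁ ≠ q₁ → p₂ ≠ q₂ → p₃ ≠ q₃ → c p₁ = c q₁ → c p₂ = c q₂ → c p₃ = c q₃ →
      c p₁ ≠ c p₂ → c p₁ ≠ c p₃ → c p₂ ≠ c p₃ → False := by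
    intro p₁ q₁ p₂ q₂ p₃ q₃ a₁ b₁ a₂ b₂ a₃ b₃ a₄ b₄ a₅ b₅ a₆ b₆ n₁ n₂ n₃ e₁ e₂ e₃ d₁ d₂ d₃
    refine count3 Mx c (k - 2) (by omega) (fun v hv => hcb' v (hMxprop v hv).1 (hMxprop v hv).2)
      ?_ (hMxmem _ a₁ b₁) (hMxmem _ a₂ b₂) (hMxmem _ a₃ b₃) (hMxmem _ a₄ b₄)
      (hMxmem _ a₅ b₅) (hMxmem _ a₆ b₆) n₁ n₂ n₃ e₁ e₂ e₃ d₁ d₂ d₃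
    intro i hi
    obtain ⟨w, hw1, hw2, hw3⟩ := hcn i hi
    exact ⟨w, hMxmem w hw1 (G.ne_of_adj hw2).symm, hw3⟩
  have countY : ∀ p₁ q₁ p₂ q₂ p₃ q₃ : V,
      G.Adj y p₁ → p₁ ≠ x → G.Adj y q₁ → q₁ ≠ x → G.Adj y p₂ → p₂ ≠ x → G.Adj y q₂ → q₂ ≠ x →
      G.Adj y p₃ → p₃ ≠ x → G.Adj y q₃ → q₃ ≠ x →
      p₁ ≠ q₁ → p₂ ≠ q₂ → p₃ ≠ q₃ → c p₁ = c q₁ → c p₂ = c q₂ → c p₃ = c q₃ →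
      c p₁ ≠ c p₂ → c p₁ ≠ c p₃ → c p₂ ≠ c p₃ → False := by
    intro p₁ q₁ p₂ q₂ p₃ q₃ a₁ b₁ a₂ b₂ a₃ b₃ a₄ b₄ a₅ b₅ a₆ b₆ n₁ n₂ n₃ e₁ e₂ e₃ d₁ d₂ d₃
    refine count3 My c (k - 2) (by omega) (fun v hv => hcb'' v (hMyprop v hv).1 (hMyprop v hv).2)
      ?_ (hMymem _ a₁ b₁) (hMymem _ a₂ b₂) (hMymem _ a₃ b₃) (hMymem _ a₄ b₄)
      (hMymem _ a₅ b₅) (hMymem _ a₆ b₆) n₁ n₂ n₃ e₁ e₂ e₃ d₁ d₂ d₃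
    intro i hi
    obtain ⟨w, hw1, hw2, hw3⟩ := hcn i hi
    exact ⟨w, hMymem w hw2 (G.ne_of_adj hw1).symm, hw3⟩
  by_cases hA : ∃ a, G.Adj x a ∧ a ≠ y ∧ ¬G.Adj y a
  · -- |A| = 2 branch
    obtain ⟨a₁, hxa₁, ha₁y, hnya₁⟩ := hA
    obtain ⟨a₂, hxa₂, ha₂y, ha₂a₁, hnya₂, hexY⟩ :=
      twoNonNbrs G hdc hchrom hdx hxy hxa₁ hnya₁ (Ne.symm ha₁y)
    have hAdjY : ∀ w, G.Adj x w → w ≠ y → w ≠ a₁ → w ≠ a₂ → G.Adj y w := by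
      intro w h1 h2 h3 h4
      by_contra hno
      rcases hexY w h1 h2 hno with h | h
      · exact h3 h
      · exact h4 h
    obtain ⟨z₁, hxz₁, hz₁a₁, hz₁y, hna₁z₁, hexA₁⟩ :=
      twoNonNbrs G hdc hchrom hdx hxa₁ hxy (fun h => hnya₁ h.symm) ha₁y
    have hz₁a₂ : z₁ ≠ a₂ := by
      intro h
      rw [h] at hna₁z₁
      exact noTriangle G hdc hchrom hdx hxy hxa₁ hxa₂ (Ne.symm ha₁y) (Ne.symm ha₂y)
        (Ne.symm ha₂a₁) hnya₁ hnya₂ hna₁z₁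
    have hAdjYz₁ : G.Adj y z₁ := hAdjY z₁ hxz₁ hz₁y hz₁a₁ hz₁a₂
    obtain ⟨ζ, hxζ, hζa₂, hζy, hna₂ζ, hexA₂⟩ :=
      twoNonNbrs G hdc hchrom hdx hxa₂ hxy (fun h => hnya₂ h.symm) ha₂y
    have hζa₁ : ζ ≠ a₁ := by
      intro h
      rw [h] at hna₂ζ
      exact noTriangle G hdc hchrom hdx hxy hxa₁ hxa₂ (Ne.symm ha₁y) (Ne.symm ha₂y)
        (Ne.symm ha₂a₁) hnya₁ hnya₂ (fun hadj => hna₂ζ hadj.symm)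
    obtain ⟨z₂, hxz₂, hz₂z₁, hz₂a₁, hnz₁z₂, hexZ₁⟩ :=
      twoNonNbrs G hdc hchrom hdx hxz₁ hxa₁ (fun h => hna₁z₁ h.symm) hz₁a₁
    have hz₂y : z₂ ≠ y := by
      intro h
      rw [h] at hnz₁z₂
      exact hnz₁z₂ hAdjYz₁.symm
    have hζz₁ : ζ ≠ z₁ := by
      intro h
      rw [h] at hna₂ζ
      have h2 : a₂ = z₂ := by
        rcases hexZ₁ a₂ hxa₂ (Ne.symm hz₁a₂) (fun hadj => hna₂ζ hadj.symm) with h' | h'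
        · exact absurd h' ha₂a₁
        · exact h'
      exact noSharedPair G hdc hchrom hxa₁ hxa₂ hxy hxz₁
        (Ne.symm hz₁y) (Ne.symm ha₁y) (Ne.symm ha₂y) hz₁a₁ hz₁a₂ (Ne.symm ha₂a₁)
        hnya₁ hnya₂ (fun hadj => hna₁z₁ hadj.symm) (fun hadj => hna₂ζ hadj.symm)
        hexY
        (fun w hw1 hw2 hw3 => (hexZ₁ w hw1 hw2 hw3).imp id (fun hh => hh.trans h2.symm))
    have hz₂a₂ : z₂ ≠ a₂ := by
      intro h
      rw [h] at hnz₁z₂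
      rcases hexA₂ z₁ hxz₁ hz₁a₂ (fun hadj => hnz₁z₂ hadj.symm) with h' | h'
      · exact hz₁y h'
      · exact hζz₁ h'.symm
    have hAdjYz₂ : G.Adj y z₂ := hAdjY z₂ hxz₂ hz₂y hz₂a₁ hz₂a₂
    have hforceX : ∀ aa zz, G.Adj x aa → aa ≠ y → ¬G.Adj y aa →
        (∀ w, G.Adj x w → w ≠ aa → ¬G.Adj aa w → w = y ∨ w = zz) → c zz = c aa := by
      intro aa zz h1 h2 h3 hex
      have hbnd : c aa < k - 2 := hcb' aa h1 h2
      obtain ⟨w, hw1, hw2, hw3⟩ := hcn _ hbnd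
      have hwa : w ≠ aa := fun h => h3 (h ▸ hw2)
      have hnw : ¬G.Adj aa w := fun h =>
        (hnadjX w aa hw1 (G.ne_of_adj hw2).symm h1 h2 hw3) h.symm
      rcases hex w hw1 hwa hnw with h | h
      · rw [h] at hw2
        exact (G.loopless.irrefl y hw2).elim
      · rw [← h]
        exact hw3
    have hfz₁ : c z₁ = c a₁ := hforceX a₁ z₁ hxa₁ ha₁y hnya₁ hexA₁
    have hfζ : c ζ = c a₂ := hforceX a₂ ζ hxa₂ ha₂y hnya₂ hexA₂
    have hAdja₁a₂ : G.Adj a₁ a₂ := by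
      by_contra hno
      rcases hexA₁ a₂ hxa₂ ha₂a₁ hno with h | h
      · exact ha₂y h
      · exact hz₁a₂ h.symm
    have hca₁a₂ : c a₁ ≠ c a₂ :=
      fun h => hnadjX a₁ a₂ hxa₁ ha₁y hxa₂ ha₂y h hAdja₁a₂
    have hcount : ∀ u u', G.Adj x u → u ≠ y → G.Adj x u' → u' ≠ y → u ≠ u' →
        c u ≠ c a₁ → c u ≠ c a₂ → c u' = c u → False := by
      intro u u' h1 h2 h3 h4 h5 h6 h7 h8
      exact countX a₁ z₁ a₂ ζ u u' hxa₁ ha₁y hxz₁ hz₁y hxa₂ ha₂y hxζ hζy h1 h2 h3 h4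
        (Ne.symm hz₁a₁) (Ne.symm hζa₂) h5 hfz₁.symm hfζ.symm h8.symm hca₁a₂
        (Ne.symm h6) (Ne.symm h7)
    have houtside : ∀ α β, G.Adj x α → G.Adj x β → α ≠ y → β ≠ y →
        α ≠ a₁ → α ≠ a₂ → α ≠ z₁ → α ≠ ζ → β ≠ a₁ → β ≠ a₂ → β ≠ z₁ → β ≠ ζ →
        α ≠ β → ¬G.Adj α β → False := by
      intro α β hxα hxβ hαy hβy hαa₁ hαa₂ hαz₁ hαζ hβa₁ hβa₂ hβz₁ hβζ hαβ hnαβ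
      have hAa₁α : G.Adj a₁ α := by
        by_contra hno
        rcases hexA₁ α hxα hαa₁ hno with h | h
        · exact hαy h
        · exact hαz₁ h
      have hAa₂α : G.Adj a₂ α := by
        by_contra hno
        rcases hexA₂ α hxα hαa₂ hno with h | h
        · exact hαy h
        · exact hαζ h
      have hAa₁β : G.Adj a₁ β := by
        by_contra hno
        rcases hexA₁ β hxβ hβa₁ hno with h | h
        · exact hβy h
        · exact hβz₁ h
      have hAa₂β : G.Adj a₂ β := by
        by_contra hno
        rcases hexA₂ β hxβ hβa₂ hno with h | h
        · exact hβy h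
        · exact hβζ h
      have hcαa₁ : c α ≠ c a₁ := fun h => hnadjX α a₁ hxα hαy hxa₁ ha₁y h hAa₁α.symm
      have hcαa₂ : c α ≠ c a₂ := fun h => hnadjX α a₂ hxα hαy hxa₂ ha₂y h hAa₂α.symm
      have hcβa₁ : c β ≠ c a₁ := fun h => hnadjX β a₁ hxβ hβy hxa₁ ha₁y h hAa₁β.symm
      have hcβa₂ : c β ≠ c a₂ := fun h => hnadjX β a₂ hxβ hβy hxa₂ ha₂y h hAa₂β.symm
      have hcαβ : c α ≠ c β := fun h =>
        hcount α β hxα hαy hxβ hβy hαβ hcαa₁ hcαa₂ h.symm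
      obtain ⟨α', hxα', hα'α, hα'β, hnαα', hexα⟩ :=
        twoNonNbrs G hdc hchrom hdx hxα hxβ hnαβ hαβ
      have hα'y : α' ≠ y := by
        intro h
        rw [h] at hnαα'
        exact hnαα' (hAdjY α hxα hαy hαa₁ hαa₂).symm
      have hsoloX : ∀ u, G.Adj x u → u ≠ y → c u = c α → u = α := by
        intro u hxu huy hcu
        by_contra hneu
        have hnαu : ¬G.Adj α u := fun h => (hnadjX u α hxu huy hxα hαy hcu) h.symm
        rcases hexα u hxu hneu hnαu with h | h
        · rw [h] at hcu
          exact hcαβ hcu.symm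
        · rw [h] at hcu
          exact hcount α α' hxα hαy hxα' hα'y (Ne.symm hα'α) hcαa₁ hcαa₂ hcu
      obtain ⟨β', hxβ', hβ'β, hβ'α, hnββ', hexβ⟩ :=
        twoNonNbrs G hdc hchrom hdx hxβ hxα (fun h => hnαβ h.symm) (Ne.symm hαβ)
      have hβ'y : β' ≠ y := by
        intro h
        rw [h] at hnββ'
        exact hnββ' (hAdjY β hxβ hβy hβa₁ hβa₂).symm
      have hβ'a₁ : β' ≠ a₁ := by
        intro h
        rw [h] at hnββ'
        rcases hexA₁ β hxβ hβa₁ (fun hadj => hnββ' hadj.symm) with h' | h'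
        · exact hβy h'
        · exact hβz₁ h'
      have hβ'a₂ : β' ≠ a₂ := by
        intro h
        rw [h] at hnββ'
        rcases hexA₂ β hxβ hβa₂ (fun hadj => hnββ' hadj.symm) with h' | h'
        · exact hβy h'
        · exact hβζ h'
      have hAdjyβ' : G.Adj y β' := hAdjY β' hxβ' hβ'y hβ'a₁ hβ'a₂
      have hAdjyβ : G.Adj y β := hAdjY β hxβ hβy hβa₁ hβa₂
      have hAdjyα : G.Adj y α := hAdjY α hxα hαy hαa₁ hαa₂
      have hsoloY : ∀ v, G.Adj y v → v ≠ x → c v = c β → v = β := by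
        intro v hyv hvx hcv
        by_contra hnev
        have hnβv : ¬G.Adj β v := fun h =>
          (hnadjY v β hyv hvx hAdjyβ (G.ne_of_adj hxβ).symm hcv) h.symm
        have hv : v = α ∨ v = β' := by
          by_contra hcon2
          push_neg at hcon2
          exact noThree G hdc hchrom hdy hAdjyβ
            (w₁ := α) (w₂ := β') (w₃ := v) hAdjyα hAdjyβ' hyv
            (fun h => hnαβ h.symm) hnββ' hnβv
            hαβ hβ'β hnev
            (Ne.symm hβ'α) (Ne.symm hcon2.1) (Ne.symm hcon2.2)
        rcases hv with h | h
        · rw [h] at hcv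
          exact hcαβ hcv
        · rw [h] at hcv
          exact hcount β β' hxβ hβy hxβ' hβ'y (Ne.symm hβ'β) hcβa₁ hcβa₂ hcv
      exact fire G hchrom hk2 hxy hcb hcp (hcb' α hxα hαy) (hcb' β hxβ hβy) hcαβ
        (fun u h1 h2 h3 v h4 h5 h6 => by
          rw [hsoloX u h1 h2 h3, hsoloY v h4 h5 h6]; exact hnαβ)
    by_cases hj2 : ζ = z₂
    · -- leaf j = 2 : kill (a₁, z₂) through y
      have hAa₁z₂ : G.Adj a₁ z₂ := by
        by_contra hno
        rcases hexA₁ z₂ hxz₂ hz₂a₁ hno with h | h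
        · exact hz₂y h
        · exact hz₂z₁ h
      refine kill G hdc hchrom hdx hxa₁ hxz₂ hAa₁z₂ (w₀ := y) ?_
      intro a b hxa hxb haa₁ haz₂ hba₁ hbz₂ hab hnab
      by_cases hay : a = y
      · exact Or.inl hay
      by_cases hby : b = y
      · exact Or.inr hby
      exfalso
      by_cases haa₂ : a = a₂
      · rcases hexA₂ b hxb (fun h => hab (haa₂.trans h.symm))
          (by rw [← haa₂]; exact hnab) with h | h
        · exact hby h
        · rw [hj2] at h
          exact hbz₂ h
      by_cases hba₂ : b = a₂
      · rcases hexA₂ a hxa (fun h => hab (h.trans hba₂.symm))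
          (by rw [← hba₂]; exact fun h => hnab h.symm) with h | h
        · exact hay h
        · rw [hj2] at h
          exact haz₂ h
      by_cases haz₁ : a = z₁
      · rcases hexZ₁ b hxb (fun h => hab (haz₁.trans h.symm))
          (by rw [← haz₁]; exact hnab) with h | h
        · exact hba₁ h
        · exact hbz₂ h
      by_cases hbz₁ : b = z₁
      · rcases hexZ₁ a hxa (fun h => hab (h.trans hbz₁.symm))
          (by rw [← hbz₁]; exact fun h => hnab h.symm) with h | h
        · exact haa₁ h
        · exact haz₂ h
      exact houtside a b hxa hxb hay hby haa₁ haa₂ haz₁ (by rw [hj2]; exact haz₂)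
        hba₁ hba₂ hbz₁ (by rw [hj2]; exact hbz₂) hab hnab
    obtain ⟨z₃, hxz₃, hz₃z₂, hz₃z₁, hnz₂z₃, hexZ₂⟩ :=
      twoNonNbrs G hdc hchrom hdx hxz₂ hxz₁ (fun h => hnz₁z₂ h.symm) hz₂z₁
    have hz₂ζ : z₂ ≠ ζ := fun h => hj2 h.symm
    have hz₃y : z₃ ≠ y := by
      intro h
      rw [h] at hnz₂z₃
      exact hnz₂z₃ hAdjYz₂.symm
    have hz₃a₁ : z₃ ≠ a₁ := by
      intro h
      rw [h] at hnz₂z₃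
      rcases hexA₁ z₂ hxz₂ hz₂a₁ (fun hadj => hnz₂z₃ hadj.symm) with h' | h'
      · exact hz₂y h'
      · exact hz₂z₁ h'
    have hz₃a₂ : z₃ ≠ a₂ := by
      intro h
      rw [h] at hnz₂z₃
      rcases hexA₂ z₂ hxz₂ hz₂a₂ (fun hadj => hnz₂z₃ hadj.symm) with h' | h'
      · exact hz₂y h'
      · exact hz₂ζ h'
    by_cases hj3 : ζ = z₃
    · -- leaf j = 3 : kill (z₁, z₃) through y
      have hAz₁z₃ : G.Adj z₁ z₃ := by
        by_contra hno
        rcases hexZ₁ z₃ hxz₃ hz₃z₁ hno with h | h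
        · exact hz₃a₁ h
        · exact hz₃z₂ h
      refine kill G hdc hchrom hdx hxz₁ hxz₃ hAz₁z₃ (w₀ := y) ?_
      intro a b hxa hxb haz₁ haz₃ hbz₁ hbz₃ hab hnab
      by_cases hay : a = y
      · exact Or.inl hay
      by_cases hby : b = y
      · exact Or.inr hby
      exfalso
      by_cases haa₁ : a = a₁
      · rcases hexA₁ b hxb (fun h => hab (haa₁.trans h.symm))
          (by rw [← haa₁]; exact hnab) with h | h
        · exact hby h
        · exact hbz₁ h
      by_cases hba₁ : b = a₁
      · rcases hexA₁ a hxa (fun h => hab (h.trans hba₁.symm))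
          (by rw [← hba₁]; exact fun h => hnab h.symm) with h | h
        · exact hay h
        · exact haz₁ h
      by_cases haa₂ : a = a₂
      · rcases hexA₂ b hxb (fun h => hab (haa₂.trans h.symm))
          (by rw [← haa₂]; exact hnab) with h | h
        · exact hby h
        · rw [hj3] at h
          exact hbz₃ h
      by_cases hba₂ : b = a₂
      · rcases hexA₂ a hxa (fun h => hab (h.trans hba₂.symm))
          (by rw [← hba₂]; exact fun h => hnab h.symm) with h | h
        · exact hay h
        · rw [hj3] at h
          exact haz₃ h
      by_cases haz₂ : a = z₂
      · rcases hexZ₂ b hxb (fun h => hab (haz₂.trans h.symm))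
          (by rw [← haz₂]; exact hnab) with h | h
        · exact hbz₁ h
        · exact hbz₃ h
      by_cases hbz₂ : b = z₂
      · rcases hexZ₂ a hxa (fun h => hab (h.trans hbz₂.symm))
          (by rw [← hbz₂]; exact fun h => hnab h.symm) with h | h
        · exact haz₁ h
        · exact haz₃ h
      exact houtside a b hxa hxb hay hby haa₁ haa₂ haz₁ (by rw [hj3]; exact haz₃)
        hba₁ hba₂ hbz₁ (by rw [hj3]; exact hbz₃) hab hnab
    · -- final case : fire on (z₂, z₃)
      obtain ⟨z₄, hxz₄, hz₄z₃, hz₄z₂, hnz₃z₄, hexZ₃⟩ :=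
        twoNonNbrs G hdc hchrom hdx hxz₃ hxz₂ (fun h => hnz₂z₃ h.symm) hz₃z₂
      have hz₃ζ : z₃ ≠ ζ := fun h => hj3 h.symm
      have hAdjYz₃ : G.Adj y z₃ := hAdjY z₃ hxz₃ hz₃y hz₃a₁ hz₃a₂
      have hz₄y : z₄ ≠ y := by
        intro h
        rw [h] at hnz₃z₄
        exact hnz₃z₄ hAdjYz₃.symm
      have hz₄a₁ : z₄ ≠ a₁ := by
        intro h
        rw [h] at hnz₃z₄
        rcases hexA₁ z₃ hxz₃ hz₃a₁ (fun hadj => hnz₃z₄ hadj.symm) with h' | h'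
        · exact hz₃y h'
        · exact hz₃z₁ h'
      have hz₄a₂ : z₄ ≠ a₂ := by
        intro h
        rw [h] at hnz₃z₄
        rcases hexA₂ z₃ hxz₃ hz₃a₂ (fun hadj => hnz₃z₄ hadj.symm) with h' | h'
        · exact hz₃y h'
        · exact hz₃ζ h'
      have hAdjYz₄ : G.Adj y z₄ := hAdjY z₄ hxz₄ hz₄y hz₄a₁ hz₄a₂
      have hca₁z₂ : c z₂ ≠ c a₁ := by
        intro h
        have hAa₁z₂ : G.Adj a₁ z₂ := by
          by_contra hno
          rcases hexA₁ z₂ hxz₂ hz₂a₁ hno with h' | h'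
          · exact hz₂y h'
          · exact hz₂z₁ h'
        exact hnadjX z₂ a₁ hxz₂ hz₂y hxa₁ ha₁y h hAa₁z₂.symm
      have hca₂z₂ : c z₂ ≠ c a₂ := by
        intro h
        have hAa₂z₂ : G.Adj a₂ z₂ := by
          by_contra hno
          rcases hexA₂ z₂ hxz₂ hz₂a₂ hno with h' | h'
          · exact hz₂y h'
          · exact hz₂ζ h'
        exact hnadjX z₂ a₂ hxz₂ hz₂y hxa₂ ha₂y h hAa₂z₂.symm
      have hca₁z₃ : c z₃ ≠ c a₁ := by
        intro h
        have hAa₁z₃ : G.Adj a₁ z₃ := by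
          by_contra hno
          rcases hexA₁ z₃ hxz₃ hz₃a₁ hno with h' | h'
          · exact hz₃y h'
          · exact hz₃z₁ h'
        exact hnadjX z₃ a₁ hxz₃ hz₃y hxa₁ ha₁y h hAa₁z₃.symm
      have hca₂z₃ : c z₃ ≠ c a₂ := by
        intro h
        have hAa₂z₃ : G.Adj a₂ z₃ := by
          by_contra hno
          rcases hexA₂ z₃ hxz₃ hz₃a₂ hno with h' | h'
          · exact hz₃y h'
          · exact hz₃ζ h'
        exact hnadjX z₃ a₂ hxz₃ hz₃y hxa₂ ha₂y h hAa₂z₃.symm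
      have hcz₂z₃ : c z₂ ≠ c z₃ := fun h =>
        hcount z₂ z₃ hxz₂ hz₂y hxz₃ hz₃y (Ne.symm hz₃z₂) hca₁z₂ hca₂z₂ h.symm
      have hsoloXz₂ : ∀ u, G.Adj x u → u ≠ y → c u = c z₂ → u = z₂ := by
        intro u hxu huy hcu
        by_contra hneu
        have hnz₂u : ¬G.Adj z₂ u := fun h => (hnadjX u z₂ hxu huy hxz₂ hz₂y hcu) h.symm
        rcases hexZ₂ u hxu hneu hnz₂u with h | h
        · rw [h] at hcu
          exact hca₁z₂ (hcu.symm.trans hfz₁)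
        · rw [h] at hcu
          exact hcz₂z₃ hcu.symm
      have hsoloYz₃ : ∀ v, G.Adj y v → v ≠ x → c v = c z₃ → v = z₃ := by
        intro v hyv hvx hcv
        by_contra hnev
        have hnz₃v : ¬G.Adj z₃ v := fun h =>
          (hnadjY v z₃ hyv hvx hAdjYz₃ (G.ne_of_adj hxz₃).symm hcv) h.symm
        have hv : v = z₂ ∨ v = z₄ := by
          by_contra hcon2
          push_neg at hcon2
          exact noThree G hdc hchrom hdy hAdjYz₃
            (w₁ := z₂) (w₂ := z₄) (w₃ := v) hAdjYz₂ hAdjYz₄ hyv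
            (fun h => hnz₂z₃ h.symm) hnz₃z₄ hnz₃v
            (Ne.symm hz₃z₂) hz₄z₃ hnev
            (Ne.symm hz₄z₂) (Ne.symm hcon2.1) (Ne.symm hcon2.2)
        rcases hv with h | h
        · rw [h] at hcv
          exact hcz₂z₃ hcv
        · rw [h] at hcv
          exact hcount z₃ z₄ hxz₃ hz₃y hxz₄ hz₄y (Ne.symm hz₄z₃) hca₁z₃ hca₂z₃ hcv
      exact fire G hchrom hk2 hxy hcb hcp (hcb' z₂ hxz₂ hz₂y) (hcb' z₃ hxz₃ hz₃y) hcz₂z₃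
        (fun u h1 h2 h3 v h4 h5 h6 => by
          rw [hsoloXz₂ u h1 h2 h3, hsoloYz₃ v h4 h5 h6]; exact hnz₂z₃)
  · -- A = ∅ branch
    push_neg at hA
    have hMeq : Mx = My := by
      apply Finset.eq_of_subset_of_card_le
      · intro w hw
        obtain ⟨h1, h2⟩ := hMxprop w hw
        exact hMymem w (hA w h1 h2) (G.ne_of_adj h1).symm
      · rw [hMxcard, hMycard]
    have hyNe : ∀ w w', G.Adj x w → w ≠ y → ¬G.Adj w w' → w' ≠ y := by
      intro w w' h1 h2 hn h
      exact hn (h ▸ (hA w h1 h2).symm)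
    rcases pigeon Mx c (k - 2) (by omega)
        (fun v hv => hcb' v (hMxprop v hv).1 (hMxprop v hv).2) with
      ⟨a, ha, b, hb, e, he, hab, hae, hbe, hfab, hfae⟩ |
      ⟨p, hp, q, hq, r, hr, s, hs, hpq, hrs, hfpq, hfrs, hfpr⟩
    · obtain ⟨haA, haY⟩ := hMxprop a ha
      obtain ⟨hbA, hbY⟩ := hMxprop b hb
      obtain ⟨heA, heY⟩ := hMxprop e he
      exact noTriangle G hdc hchrom hdx haA hbA heA hab hae hbe
        (hnadjX a b haA haY hbA hbY hfab) (hnadjX a e haA haY heA heY hfae)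
        (hnadjX b e hbA hbY heA heY (hfab.symm.trans hfae))
    · obtain ⟨hpA, hpY⟩ := hMxprop p hp
      obtain ⟨hqA, hqY⟩ := hMxprop q hq
      obtain ⟨hrA, hrY⟩ := hMxprop r hr
      obtain ⟨hsA, hsY⟩ := hMxprop s hs
      have hpr : p ≠ r := fun h => hfpr (congrArg c h)
      have hps : p ≠ s := fun h => hfpr ((congrArg c h).trans hfrs.symm)
      have hqr : q ≠ r := fun h => hfpr (hfpq.trans (congrArg c h))
      have hqs : q ≠ s := fun h => hfpr (hfpq.trans ((congrArg c h).trans hfrs.symm))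
      have hnpq : ¬G.Adj p q := hnadjX p q hpA hpY hqA hqY hfpq
      have hnrs : ¬G.Adj r s := hnadjX r s hrA hrY hsA hsY hfrs
      have hcov : ∀ α β, G.Adj x α → α ≠ y → G.Adj x β → β ≠ y → α ≠ β → ¬G.Adj α β →
          α ≠ p → α ≠ q → α ≠ r → α ≠ s → β ≠ p → β ≠ q → β ≠ r → β ≠ s → False := by
        intro α β hxα hαy hxβ hβy hαβ hnαβ hαp hαq hαr hαs hβp hβq hβr hβs
        have hcαp : c α ≠ c p := fun h =>
          noTriangle G hdc hchrom hdx hxα hpA hqA hαp hαq hpq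
            (hnadjX α p hxα hαy hpA hpY h)
            (hnadjX α q hxα hαy hqA hqY (h.trans hfpq)) hnpq
        have hcαr : c α ≠ c r := fun h =>
          noTriangle G hdc hchrom hdx hxα hrA hsA hαr hαs hrs
            (hnadjX α r hxα hαy hrA hrY h)
            (hnadjX α s hxα hαy hsA hsY (h.trans hfrs)) hnrs
        have hcβp : c β ≠ c p := fun h =>
          noTriangle G hdc hchrom hdx hxβ hpA hqA hβp hβq hpq
            (hnadjX β p hxβ hβy hpA hpY h)
            (hnadjX β q hxβ hβy hqA hqY (h.trans hfpq)) hnpq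
        have hcβr : c β ≠ c r := fun h =>
          noTriangle G hdc hchrom hdx hxβ hrA hsA hβr hβs hrs
            (hnadjX β r hxβ hβy hrA hrY h)
            (hnadjX β s hxβ hβy hsA hsY (h.trans hfrs)) hnrs
        have hcαβ : c α ≠ c β := by
          intro h
          exact countX p q r s α β hpA hpY hqA hqY hrA hrY hsA hsY hxα hαy hxβ hβy
            hpq hrs hαβ hfpq hfrs h hfpr (Ne.symm hcαp) (Ne.symm hcαr)
        obtain ⟨α', hxα', hα'α, hα'β, hnαα', hexα⟩ :=
          twoNonNbrs G hdc hchrom hdx hxα hxβ hnαβ hαβ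
        have hα'y : α' ≠ y := hyNe α α' hxα hαy hnαα'
        have hsoloX : ∀ u, G.Adj x u → u ≠ y → c u = c α → u = α := by
          intro u hxu huy hcu
          by_contra hneu
          have hnαu : ¬G.Adj α u := fun h =>
            (hnadjX u α hxu huy hxα hαy hcu) h.symm
          rcases hexα u hxu hneu hnαu with h | h
          · rw [h] at hcu; exact hcαβ hcu.symm
          · rw [h] at hcu
            exact countX p q r s α α' hpA hpY hqA hqY hrA hrY hsA hsY hxα hαy hxα' hα'y
              hpq hrs (Ne.symm hα'α) hfpq hfrs hcu.symm hfpr (Ne.symm hcαp) (Ne.symm hcαr)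
        obtain ⟨β', hxβ', hβ'β, hβ'α, hnββ', hexβ⟩ :=
          twoNonNbrs G hdc hchrom hdx hxβ hxα (fun h => hnαβ h.symm) (Ne.symm hαβ)
        have hβ'y : β' ≠ y := hyNe β β' hxβ hβy hnββ'
        have hsoloY : ∀ v, G.Adj y v → v ≠ x → c v = c β → v = β := by
          intro v hyv hvx hcv
          obtain ⟨hxv, hvy⟩ := hMxprop v (by rw [hMeq]; exact hMymem v hyv hvx)
          by_contra hnev
          have hnβv : ¬G.Adj β v := fun h => (hnadjX v β hxv hvy hxβ hβy hcv) h.symm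
          rcases hexβ v hxv hnev hnβv with h | h
          · rw [h] at hcv; exact hcαβ hcv
          · rw [h] at hcv
            exact countX p q r s β β' hpA hpY hqA hqY hrA hrY hsA hsY hxβ hβy hxβ' hβ'y
              hpq hrs (Ne.symm hβ'β) hfpq hfrs hcv.symm hfpr (Ne.symm hcβp) (Ne.symm hcβr)
        exact fire G hchrom hk2 hxy hcb hcp (hcb' α hxα hαy) (hcb' β hxβ hβy) hcαβ
          (fun u hxu huy hcu v hyv hvx hcv => by
            rw [hsoloX u hxu huy hcu, hsoloY v hyv hvx hcv]; exact hnαβ)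
      obtain ⟨p', hxp', hp'p, hp'q, hnpp', hexP⟩ :=
        twoNonNbrs G hdc hchrom hdx hpA hqA hnpq hpq
      obtain ⟨q', hxq', hq'q, hq'p, hnqq', hexQ⟩ :=
        twoNonNbrs G hdc hchrom hdx hqA hpA (fun h => hnpq h.symm) hpq.symm
      have hp'y : p' ≠ y := hyNe p p' hpA hpY hnpp'
      have hq'y : q' ≠ y := hyNe q q' hqA hqY hnqq'
      by_cases hp'r : p' = r
      · -- leaf 1 : kill (p, s) through q
        obtain ⟨r', hxr', hr'r, hr's, hnrr', hexR⟩ :=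
          twoNonNbrs G hdc hchrom hdx hrA hsA hnrs hrs
        have hnpr : ¬G.Adj p r := hp'r ▸ hnpp'
        have hr'p : r' = p := by
          rcases hexR p hpA hpr (fun h => hnpr h.symm) with h | h
          · exact absurd h hps
          · exact h.symm
        have hexR' : ∀ w, G.Adj x w → w ≠ r → ¬G.Adj r w → w = s ∨ w = p := by
          intro w h1 h2 h3
          rcases hexR w h1 h2 h3 with h | h
          · exact Or.inl h
          · exact Or.inr (h.trans hr'p)
        have hAps : G.Adj p s := by
          by_contra hno
          rcases hexP s hsA (Ne.symm hps) hno with h | h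
          · exact hqs h.symm
          · rw [hp'r] at h
            exact hrs h.symm
        refine kill G hdc hchrom hdx hpA hsA hAps (w₀ := q) ?_
        intro a b hxa hxb hap has hbp hbs hab hnab
        by_cases hay : a = y
        · exact (hnab (by rw [hay]; exact hA b hxb (fun h => hab (hay.trans h.symm)))).elim
        by_cases hby : b = y
        · exact (hnab (by rw [hby]; exact (hA a hxa hay).symm)).elim
        by_cases haq : a = q
        · exact Or.inl haq
        by_cases hbq : b = q
        · exact Or.inr hbq
        exfalso
        by_cases har : a = r
        · rcases hexR' b hxb (fun h => hab (har.trans h.symm)) (by rw [← har]; exact hnab) with h | h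
          · exact hbs h
          · exact hbp h
        by_cases hbr : b = r
        · rcases hexR' a hxa (fun h => hab (h.trans hbr.symm))
            (by rw [← hbr]; exact fun h => hnab h.symm) with h | h
          · exact has h
          · exact hap h
        exact hcov a b hxa hay hxb hby hab hnab hap haq har has hbp hbq hbr hbs
      by_cases hp's : p' = s
      · -- leaf 2 : kill (p, r) through q
        obtain ⟨s', hxs', hs's, hs'r, hnss', hexS⟩ :=
          twoNonNbrs G hdc hchrom hdx hsA hrA (fun h => hnrs h.symm) hrs.symm
        have hnps : ¬G.Adj p s := hp's ▸ hnpp'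
        have hs'p : s' = p := by
          rcases hexS p hpA hps (fun h => hnps h.symm) with h | h
          · exact absurd h hpr
          · exact h.symm
        have hexS' : ∀ w, G.Adj x w → w ≠ s → ¬G.Adj s w → w = r ∨ w = p := by
          intro w h1 h2 h3
          rcases hexS w h1 h2 h3 with h | h
          · exact Or.inl h
          · exact Or.inr (h.trans hs'p)
        have hApr : G.Adj p r := by
          by_contra hno
          rcases hexP r hrA (Ne.symm hpr) hno with h | h
          · exact hqr h.symm
          · rw [hp's] at h
            exact hrs h
        refine kill G hdc hchrom hdx hpA hrA hApr (w₀ := q) ?_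
        intro a b hxa hxb hap har hbp hbr hab hnab
        by_cases hay : a = y
        · exact (hnab (by rw [hay]; exact hA b hxb (fun h => hab (hay.trans h.symm)))).elim
        by_cases hby : b = y
        · exact (hnab (by rw [hby]; exact (hA a hxa hay).symm)).elim
        by_cases haq : a = q
        · exact Or.inl haq
        by_cases hbq : b = q
        · exact Or.inr hbq
        exfalso
        by_cases has : a = s
        · rcases hexS' b hxb (fun h => hab (has.trans h.symm)) (by rw [← has]; exact hnab) with h | h
          · exact hbr h
          · exact hbp h
        by_cases hbs : b = s
        · rcases hexS' a hxa (fun h => hab (h.trans hbs.symm))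
            (by rw [← hbs]; exact fun h => hnab h.symm) with h | h
          · exact har h
          · exact hap h
        exact hcov a b hxa hay hxb hby hab hnab hap haq har has hbp hbq hbr hbs
      by_cases hq'r : q' = r
      · -- leaf 3 : kill (q, s) through p
        obtain ⟨r', hxr', hr'r, hr's, hnrr', hexR⟩ :=
          twoNonNbrs G hdc hchrom hdx hrA hsA hnrs hrs
        have hnqr : ¬G.Adj q r := hq'r ▸ hnqq'
        have hr'q : r' = q := by
          rcases hexR q hqA hqr (fun h => hnqr h.symm) with h | h
          · exact absurd h hqs
          · exact h.symm
        have hexR' : ∀ w, G.Adj x w → w ≠ r → ¬G.Adj r w → w = s ∨ w = q := by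
          intro w h1 h2 h3
          rcases hexR w h1 h2 h3 with h | h
          · exact Or.inl h
          · exact Or.inr (h.trans hr'q)
        have hAqs : G.Adj q s := by
          by_contra hno
          rcases hexQ s hsA (Ne.symm hqs) hno with h | h
          · exact hps h.symm
          · rw [hq'r] at h
            exact hrs h.symm
        refine kill G hdc hchrom hdx hqA hsA hAqs (w₀ := p) ?_
        intro a b hxa hxb haq has hbq hbs hab hnab
        by_cases hay : a = y
        · exact (hnab (by rw [hay]; exact hA b hxb (fun h => hab (hay.trans h.symm)))).elim
        by_cases hby : b = y
        · exact (hnab (by rw [hby]; exact (hA a hxa hay).symm)).elim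
        by_cases hap : a = p
        · exact Or.inl hap
        by_cases hbp : b = p
        · exact Or.inr hbp
        exfalso
        by_cases har : a = r
        · rcases hexR' b hxb (fun h => hab (har.trans h.symm)) (by rw [← har]; exact hnab) with h | h
          · exact hbs h
          · exact hbq h
        by_cases hbr : b = r
        · rcases hexR' a hxa (fun h => hab (h.trans hbr.symm))
            (by rw [← hbr]; exact fun h => hnab h.symm) with h | h
          · exact has h
          · exact haq h
        exact hcov a b hxa hay hxb hby hab hnab hap haq har has hbp hbq hbr hbs
      by_cases hq's : q' = s
      · -- leaf 4 : kill (q, r) through p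
        obtain ⟨s', hxs', hs's, hs'r, hnss', hexS⟩ :=
          twoNonNbrs G hdc hchrom hdx hsA hrA (fun h => hnrs h.symm) hrs.symm
        have hnqs : ¬G.Adj q s := hq's ▸ hnqq'
        have hs'q : s' = q := by
          rcases hexS q hqA hqs (fun h => hnqs h.symm) with h | h
          · exact absurd h hqr
          · exact h.symm
        have hexS' : ∀ w, G.Adj x w → w ≠ s → ¬G.Adj s w → w = r ∨ w = q := by
          intro w h1 h2 h3
          rcases hexS w h1 h2 h3 with h | h
          · exact Or.inl h
          · exact Or.inr (h.trans hs'q)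
        have hAqr : G.Adj q r := by
          by_contra hno
          rcases hexQ r hrA (Ne.symm hqr) hno with h | h
          · exact hpr h.symm
          · rw [hq's] at h
            exact hrs h
        refine kill G hdc hchrom hdx hqA hrA hAqr (w₀ := p) ?_
        intro a b hxa hxb haq har hbq hbr hab hnab
        by_cases hay : a = y
        · exact (hnab (by rw [hay]; exact hA b hxb (fun h => hab (hay.trans h.symm)))).elim
        by_cases hby : b = y
        · exact (hnab (by rw [hby]; exact (hA a hxa hay).symm)).elim
        by_cases hap : a = p
        · exact Or.inl hap
        by_cases hbp : b = p
        · exact Or.inr hbp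
        exfalso
        by_cases has : a = s
        · rcases hexS' b hxb (fun h => hab (has.trans h.symm)) (by rw [← has]; exact hnab) with h | h
          · exact hbr h
          · exact hbq h
        by_cases hbs : b = s
        · rcases hexS' a hxa (fun h => hab (h.trans hbs.symm))
            (by rw [← hbs]; exact fun h => hnab h.symm) with h | h
          · exact har h
          · exact haq h
        exact hcov a b hxa hay hxb hby hab hnab hap haq har has hbp hbq hbr hbs
      · -- p', q' outside {p,q,r,s}
        have hp'q' : p' ≠ q' := by
          intro h
          exact noTriangle G hdc hchrom hdx hpA hqA hxp' hpq (Ne.symm hp'p) (Ne.symm hp'q)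
            hnpq hnpp' (by rw [h]; exact hnqq')
        obtain ⟨π, hxπ, hπp', hπp, hnp'π, hexP'⟩ :=
          twoNonNbrs G hdc hchrom hdx hxp' hpA (fun h => hnpp' h.symm) hp'p
        have hπy : π ≠ y := hyNe p' π hxp' hp'y hnp'π
        have hπq : π ≠ q := by
          intro h
          rw [h] at hnp'π
          exact noTriangle G hdc hchrom hdx hpA hqA hxp' hpq (Ne.symm hp'p) (Ne.symm hp'q)
            hnpq hnpp' (fun hadj => hnp'π hadj.symm)
        have hπq' : π ≠ q' := by
          intro h
          rw [h] at hnp'π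
          exact hcov p' q' hxp' hp'y hxq' hq'y hp'q' hnp'π
            hp'p hp'q hp'r hp's hq'p hq'q hq'r hq's
        have hπrs : π = r ∨ π = s := by
          by_contra hno
          push_neg at hno
          exact hcov p' π hxp' hp'y hxπ hπy (Ne.symm hπp') hnp'π
            hp'p hp'q hp'r hp's hπp hπq hno.1 hno.2
        obtain ⟨κ, hxκ, hκq', hκq, hnq'κ, hexQ'⟩ :=
          twoNonNbrs G hdc hchrom hdx hxq' hqA (fun h => hnqq' h.symm) hq'q
        have hκy : κ ≠ y := hyNe q' κ hxq' hq'y hnq'κ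
        have hκp : κ ≠ p := by
          intro h
          rw [h] at hnq'κ
          rcases hexP q' hxq' hq'p (fun hadj => hnq'κ hadj.symm) with h' | h'
          · exact hq'q h'
          · exact hp'q' h'.symm
        have hκp' : κ ≠ p' := by
          intro h
          rw [h] at hnq'κ
          exact hcov p' q' hxp' hp'y hxq' hq'y hp'q' (fun hadj => hnq'κ hadj.symm)
            hp'p hp'q hp'r hp's hq'p hq'q hq'r hq's
        have hκrs : κ = r ∨ κ = s := by
          by_contra hno
          push_neg at hno
          exact hcov q' κ hxq' hq'y hxκ hκy (Ne.symm hκq') hnq'κ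
            hq'p hq'q hq'r hq's hκp hκq hno.1 hno.2
        have hApq' : G.Adj p q' := by
          by_contra hno
          rcases hexP q' hxq' hq'p hno with h | h
          · exact hq'q h
          · exact hp'q' h.symm
        rcases hπrs with hπr | hπs <;> rcases hκrs with hκr | hκs
        · -- both second nonneighbours are r : r has three non-nbrs s, p', q'
          rw [hπr] at hnp'π
          rw [hκr] at hnq'κ
          exact noThree G hdc hchrom hdx hrA
            (w₁ := s) (w₂ := p') (w₃ := q') hsA hxp' hxq'
            hnrs (fun h => hnp'π h.symm) (fun h => hnq'κ h.symm)
            hrs.symm hp'r hq'r (Ne.symm hp's) (Ne.symm hq's) hp'q'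
        · -- π = r, κ = s : kill (p, q') through r
          rw [hπr] at hnp'π
          rw [hκs] at hnq'κ
          obtain ⟨r', hxr', hr'r, hr's, hnrr', hexR⟩ :=
            twoNonNbrs G hdc hchrom hdx hrA hsA hnrs hrs
          have hr'p' : r' = p' := by
            rcases hexR p' hxp' hp'r (fun h => hnp'π h.symm) with h | h
            · exact absurd h hp's
            · exact h.symm
          have hexR' : ∀ w, G.Adj x w → w ≠ r → ¬G.Adj r w → w = s ∨ w = p' := by
            intro w h1 h2 h3
            rcases hexR w h1 h2 h3 with h | h
            · exact Or.inl h
            · exact Or.inr (h.trans hr'p')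
          obtain ⟨s', hxs', hs's, hs'r, hnss', hexS⟩ :=
            twoNonNbrs G hdc hchrom hdx hsA hrA (fun h => hnrs h.symm) hrs.symm
          have hs'q' : s' = q' := by
            rcases hexS q' hxq' hq's (fun h => hnq'κ h.symm) with h | h
            · exact absurd h hq'r
            · exact h.symm
          have hexS' : ∀ w, G.Adj x w → w ≠ s → ¬G.Adj s w → w = r ∨ w = q' := by
            intro w h1 h2 h3
            rcases hexS w h1 h2 h3 with h | h
            · exact Or.inl h
            · exact Or.inr (h.trans hs'q')
          refine kill G hdc hchrom hdx hpA hxq' hApq' (w₀ := r) ?_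
          intro a b hxa hxb hap haq' hbp hbq' hab hnab
          by_cases hay : a = y
          · exact (hnab (by rw [hay]; exact hA b hxb (fun h => hab (hay.trans h.symm)))).elim
          by_cases hby : b = y
          · exact (hnab (by rw [hby]; exact (hA a hxa hay).symm)).elim
          by_cases har : a = r
          · exact Or.inl har
          by_cases hbr : b = r
          · exact Or.inr hbr
          exfalso
          by_cases haq : a = q
          · rcases hexQ b hxb (fun h => hab (haq.trans h.symm)) (by rw [← haq]; exact hnab) with h | h
            · exact hbp h
            · exact hbq' h
          by_cases hbq : b = q
          · rcases hexQ a hxa (fun h => hab (h.trans hbq.symm))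
              (by rw [← hbq]; exact fun h => hnab h.symm) with h | h
            · exact hap h
            · exact haq' h
          by_cases has : a = s
          · rcases hexS' b hxb (fun h => hab (has.trans h.symm)) (by rw [← has]; exact hnab) with h | h
            · exact hbr h
            · exact hbq' h
          by_cases hbs : b = s
          · rcases hexS' a hxa (fun h => hab (h.trans hbs.symm))
              (by rw [← hbs]; exact fun h => hnab h.symm) with h | h
            · exact har h
            · exact haq' h
          exact hcov a b hxa hay hxb hby hab hnab hap haq har has hbp hbq hbr hbs
        · -- π = s, κ = r : kill (p, q') through s
          rw [hπs] at hnp'π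
          rw [hκr] at hnq'κ
          obtain ⟨r', hxr', hr'r, hr's, hnrr', hexR⟩ :=
            twoNonNbrs G hdc hchrom hdx hrA hsA hnrs hrs
          have hr'q' : r' = q' := by
            rcases hexR q' hxq' hq'r (fun h => hnq'κ h.symm) with h | h
            · exact absurd h hq's
            · exact h.symm
          have hexR' : ∀ w, G.Adj x w → w ≠ r → ¬G.Adj r w → w = s ∨ w = q' := by
            intro w h1 h2 h3
            rcases hexR w h1 h2 h3 with h | h
            · exact Or.inl h
            · exact Or.inr (h.trans hr'q')
          obtain ⟨s', hxs', hs's, hs'r, hnss', hexS⟩ :=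
            twoNonNbrs G hdc hchrom hdx hsA hrA (fun h => hnrs h.symm) hrs.symm
          have hs'p' : s' = p' := by
            rcases hexS p' hxp' hp's (fun h => hnp'π h.symm) with h | h
            · exact absurd h hp'r
            · exact h.symm
          have hexS' : ∀ w, G.Adj x w → w ≠ s → ¬G.Adj s w → w = r ∨ w = p' := by
            intro w h1 h2 h3
            rcases hexS w h1 h2 h3 with h | h
            · exact Or.inl h
            · exact Or.inr (h.trans hs'p')
          refine kill G hdc hchrom hdx hpA hxq' hApq' (w₀ := s) ?_
          intro a b hxa hxb hap haq' hbp hbq' hab hnab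
          by_cases hay : a = y
          · exact (hnab (by rw [hay]; exact hA b hxb (fun h => hab (hay.trans h.symm)))).elim
          by_cases hby : b = y
          · exact (hnab (by rw [hby]; exact (hA a hxa hay).symm)).elim
          by_cases has : a = s
          · exact Or.inl has
          by_cases hbs : b = s
          · exact Or.inr hbs
          exfalso
          by_cases haq : a = q
          · rcases hexQ b hxb (fun h => hab (haq.trans h.symm)) (by rw [← haq]; exact hnab) with h | h
            · exact hbp h
            · exact hbq' h
          by_cases hbq : b = q
          · rcases hexQ a hxa (fun h => hab (h.trans hbq.symm))
              (by rw [← hbq]; exact fun h => hnab h.symm) with h | h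
            · exact hap h
            · exact haq' h
          by_cases har : a = r
          · rcases hexR' b hxb (fun h => hab (har.trans h.symm)) (by rw [← har]; exact hnab) with h | h
            · exact hbs h
            · exact hbq' h
          by_cases hbr : b = r
          · rcases hexR' a hxa (fun h => hab (h.trans hbr.symm))
              (by rw [← hbr]; exact fun h => hnab h.symm) with h | h
            · exact has h
            · exact haq' h
          exact hcov a b hxa hay hxb hby hab hnab hap haq har has hbp hbq hbr hbs
        · -- both second nonneighbours are s : s has three non-nbrs r, p', q'
          rw [hπs] at hnp'π
          rw [hκs] at hnq'κ
          exact noThree G hdc hchrom hdx hsA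
            (w₁ := r) (w₂ := p') (w₃ := q') hrA hxp' hxq'
            (fun h => hnrs h.symm) (fun h => hnp'π h.symm) (fun h => hnq'κ h.symm)
            hrs hp's hq's (Ne.symm hp'r) (Ne.symm hq'r) hp'q'
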